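/- Let E be a real finite-dimensional normed vector space, let L ≥ 0, and let f : E → ℝ be differentiable, convex, and satisfy |f(y) − f(x) − ⟨f'(x), y − x⟩| ≤ (L/2)·‖y − x‖² for all x, y ∈ E. Then the gradient of f is Lipschitz continuous with constant L, i.e. ‖f'(x) − f'(y)‖* ≤ L·‖x − y‖ for all x, y ∈ E. -/

import Mathlib

/-- Gradient inequality for a convex differentiable function. -/
lemma grad_ineq_aux
    {E : Type*} [NormedAddCommGroup E] [NormedSpace ℝ E]
    (f : E → ℝ) (f' : E → (E →L[ℝ] ℝ))
    (hdiff : ∀ x, HasFDerivAt f (f' x) x)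
    (hconv : ConvexOn ℝ Set.univ f) (x z : E) :
    f x + f' x (z - x) ≤ f z := by
  set v := z - x with hv
  -- the function t ↦ f (x + t • v) has derivative f' x v at 0
  have hline : HasDerivAt (fun t : ℝ => x + t • v) v 0 := by
    simpa using ((hasDerivAt_id (0 : ℝ)).smul_const v).const_add x
  have hg : HasDerivAt (fun t : ℝ => f (x + t • v)) (f' x v) 0 := by
    have := (hdiff (x + (0 : ℝ) • v)).comp_hasDerivAt 0 hline
    simp only [zero_smul, add_zero] at this
    exact this
  have htend := hg.tendsto_slope_zero_right
  -- slope bound on (0,1)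
  have hev : ∀ᶠ t in nhdsWithin (0 : ℝ) (Set.Ioi 0),
      t⁻¹ • (f ((x + (0 + t) • v)) - f (x + (0 : ℝ) • v)) ≤ f z - f x := by
    filter_upwards [Ioo_mem_nhdsGT_of_mem (Set.mem_Ico.mpr ⟨le_refl (0:ℝ), one_pos⟩)]
      with t ht
    obtain ⟨ht0, ht1⟩ := ht
    have hcomb := hconv.2 (Set.mem_univ x) (Set.mem_univ z)
      (by linarith : (0:ℝ) ≤ 1 - t) (le_of_lt ht0) (by ring)
    have hxt : (1 - t) • x + t • z = x + t • v := by
      rw [hv]; module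
    rw [hxt] at hcomb
    have : f (x + t • v) - f x ≤ t * (f z - f x) := by
      have := hcomb
      simp only [smul_eq_mul] at this
      nlinarith
    rw [smul_eq_mul]
    rw [inv_mul_le_iff₀ ht0]
    simpa [mul_comm] using this
  have := le_of_tendsto htend hev
  linarith

theorem convex_one_approximable_implies_lipschitz_gradient
    {E : Type*} [NormedAddCommGroup E] [NormedSpace ℝ E] [FiniteDimensional ℝ E]
    (L : ℝ) (hL : 0 ≤ L)
    (f : E → ℝ) (f' : E → (E →L[ℝ] ℝ))
    (hdiff : ∀ x, HasFDerivAt f (f' x) x)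
    (hconv : ConvexOn ℝ Set.univ f)
    (happrox : ∀ x y : E, |f y - f x - f' x (y - x)| ≤ L / 2 * ‖y - x‖ ^ 2) :
    ∀ x y : E, ‖f' x - f' y‖ ≤ L * ‖x - y‖ := by
  have grad : ∀ x z : E, f x + f' x (z - x) ≤ f z := grad_ineq_aux f f' hdiff hconv
  -- key inequality: 2 t ⟨f'x - f'y, h⟩ ≤ ⟨f'x - f'y, x - y⟩ + L t² ‖h‖²
  have key : ∀ (x y : E) (t : ℝ) (h : E), 0 ≤ t →
      2 * t * (f' x h - f' y h) ≤
        (f' x (x - y) + f' y (y - x)) + L * t ^ 2 * ‖h‖ ^ 2 := by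
    intro x y t h ht
    have hn : ‖t • h‖ ^ 2 = t ^ 2 * ‖h‖ ^ 2 := by
      rw [norm_smul, mul_pow, Real.norm_eq_abs, sq_abs]
    -- first inequality: grad at x applied to y + t•h, approx at y
    have h1 : f x + (f' x (y - x) + t * f' x h) ≤ f (y + t • h) := by
      have := grad x (y + t • h)
      rwa [show y + t • h - x = (y - x) + t • h by abel, map_add, map_smul,
        smul_eq_mul] at this
    have h2 : f (y + t • h) - f y - t * f' y h ≤ L / 2 * (t ^ 2 * ‖h‖ ^ 2) := by
      have := le_trans (le_abs_self _) (happrox y (y + t • h))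
      rwa [show y + t • h - y = t • h by abel, map_smul, smul_eq_mul, hn] at this
    -- second inequality: grad at y applied to x - t•h, approx at x
    have h3 : f y + (f' y (x - y) - t * f' y h) ≤ f (x - t • h) := by
      have := grad y (x - t • h)
      rwa [show x - t • h - y = (x - y) + (-t) • h by push_cast; module, map_add,
        map_smul, smul_eq_mul, neg_mul, ← sub_eq_add_neg] at this
    have h4 : f (x - t • h) - f x + t * f' x h ≤ L / 2 * (t ^ 2 * ‖h‖ ^ 2) := by
      have := le_trans (le_abs_self _) (happrox x (x - t • h))
      rwa [show x - t • h - x = (-t) • h by module, map_smul, smul_eq_mul, neg_mul,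
        sub_neg_eq_add, norm_smul, mul_pow, Real.norm_eq_abs, abs_neg, sq_abs] at this
    have ex : f' x (x - y) = - f' x (y - x) := by
      rw [show x - y = -(y - x) by abel, map_neg]
    have ey : f' y (y - x) = - f' y (x - y) := by
      rw [show y - x = -(x - y) by abel, map_neg]
    rw [ex, ey]
    nlinarith [h1, h2, h3, h4]
  intro x y
  by_cases hxy : x = y
  · simp [hxy]
  have hxy' : (0:ℝ) < ‖x - y‖ := by
    rw [norm_pos_iff, sub_ne_zero]; exact hxy
  set D : ℝ := f' x (x - y) + f' y (y - x) with hD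
  have hDbound : D ≤ L * ‖x - y‖ ^ 2 := by
    have hk := key x y 1 (x - y) zero_le_one
    have hxyapp : f' x (x - y) - f' y (x - y) = D := by
      rw [hD, show y - x = -(x - y) by abel, map_neg]; ring
    rw [hxyapp] at hk
    nlinarith [hk]
  refine ContinuousLinearMap.opNorm_le_bound _ (by positivity) ?_
  intro u
  rcases eq_or_ne u 0 with rfl | hu
  · simp
  have hu' : (0:ℝ) < ‖u‖ := norm_pos_iff.mpr hu
  have main : ∀ h : E, ‖h‖ = ‖u‖ → f' x h - f' y h ≤ L * ‖x - y‖ * ‖u‖ := by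
    intro h hh
    have hk := key x y (‖x - y‖ / ‖u‖) h (by positivity)
    rw [hh] at hk
    have hsq : L * (‖x - y‖ / ‖u‖) ^ 2 * ‖u‖ ^ 2 = L * ‖x - y‖ ^ 2 := by
      field_simp
    rw [hsq] at hk
    have hk2 : 2 * (‖x - y‖ / ‖u‖) * (f' x h - f' y h) ≤ 2 * (L * ‖x - y‖ ^ 2) := by
      linarith
    have hk3 := mul_le_mul_of_nonneg_right hk2 (le_of_lt hu')
    have hcan : 2 * (‖x - y‖ / ‖u‖) * (f' x h - f' y h) * ‖u‖
        = 2 * ‖x - y‖ * (f' x h - f' y h) := by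
      field_simp
    rw [hcan] at hk3
    nlinarith [hk3, hu', hxy']
  have h1 := main u rfl
  have h2 := main (-u) (by rw [norm_neg])
  rw [map_neg, map_neg] at h2
  rw [Real.norm_eq_abs, ContinuousLinearMap.sub_apply, abs_le]
  constructor <;> linarith
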